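/- If the block matrix Γ^(N) = [ [C^(1), −M, −C^(2), 0, ..., 0]; ...; [C^(1), 0, ..., 0, −M, −C^(N)] ] has full column rank, then each of the matrices [M, C^(1)], [M, C^(2)], ..., [M, C^(N)] has full column rank. -/

import Mathlib

/-- If the GCCA block matrix `Γ` (with `N ≥ 1` block rows, the `j`-th being
`[C⁽⁰⁾, 0, …, 0, −M, −C⁽ʲ⁺¹⁾, 0, …, 0]`) has full column rank, then each matrix
`[M, C⁽ⁿ⁾]`, `n = 0, …, N`, has full column rank. -/
theorem stmt_13 {𝔽 : Type*} [Field 𝔽] {N I R : ℕ} (hN : 1 ≤ N)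
    {L : Fin (N + 1) → ℕ}
    (M : Matrix (Fin I) (Fin R) 𝔽)
    (C : (n : Fin (N + 1)) → Matrix (Fin I) (Fin (L n)) 𝔽)
    (Γ : Matrix (Fin N × Fin I)
      (Fin (L 0) ⊕ ((j : Fin N) × (Fin R ⊕ Fin (L j.succ)))) 𝔽)
    (hΓ1 : ∀ (j : Fin N) (i : Fin I) (l : Fin (L 0)),
      Γ (j, i) (Sum.inl l) = C 0 i l)
    (hΓ2 : ∀ (j : Fin N) (i : Fin I) (j' : Fin N) (r : Fin R),
      Γ (j, i) (Sum.inr ⟨j', Sum.inl r⟩) = if j' = j then -(M i r) else 0)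
    (hΓ3 : ∀ (j : Fin N) (i : Fin I) (j' : Fin N) (l : Fin (L j'.succ)),
      Γ (j, i) (Sum.inr ⟨j', Sum.inr l⟩) = if j' = j then -(C j'.succ i l) else 0)
    (hΓ : Function.Injective Γ.mulVecLin) :
    ∀ n : Fin (N + 1), Function.Injective (Matrix.fromCols M (C n)).mulVecLin := by
  have key : ∀ y, Γ.mulVec y = 0 → y = 0 := by
    intro y hy
    have h0 : Γ.mulVecLin y = Γ.mulVecLin 0 := by
      simp [Matrix.mulVecLin_apply, hy]
    exact hΓ h0
  have expand : ∀ (j : Fin N) (i : Fin I)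
      (y : Fin (L 0) ⊕ ((j : Fin N) × (Fin R ⊕ Fin (L j.succ))) → 𝔽),
      Γ.mulVec y (j, i) =
        (∑ l, Γ (j, i) (Sum.inl l) * y (Sum.inl l)) +
        ∑ j', ((∑ r, Γ (j, i) (Sum.inr ⟨j', Sum.inl r⟩) * y (Sum.inr ⟨j', Sum.inl r⟩)) +
          ∑ l, Γ (j, i) (Sum.inr ⟨j', Sum.inr l⟩) * y (Sum.inr ⟨j', Sum.inr l⟩)) := by
    intro j i y
    rw [Matrix.mulVec, dotProduct, Fintype.sum_sum_type]
    congr 1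
    rw [← Finset.univ_sigma_univ, Finset.sum_sigma]
    exact Finset.sum_congr rfl fun j' _ => by rw [Fintype.sum_sum_type]
  intro n
  have main : ∀ z, (Matrix.fromCols M (C n)).mulVec z = 0 → z = 0 := by
    have hz'gen : ∀ z, (Matrix.fromCols M (C n)).mulVec z = 0 → ∀ i,
        (∑ r, M i r * z (Sum.inl r)) + (∑ l, C n i l * z (Sum.inr l)) = 0 := by
      intro z hz i
      have := congrFun hz i
      simpa [Matrix.mulVec, dotProduct, Fintype.sum_sum_type] using this
    induction n using Fin.cases with
    | zero =>
      intro z hz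
      have hz' := hz'gen z hz
      set y : Fin (L 0) ⊕ ((j : Fin N) × (Fin R ⊕ Fin (L j.succ))) → 𝔽 :=
        Sum.elim (fun l => z (Sum.inr l))
          (fun p => Sum.elim (fun r => -z (Sum.inl r)) (fun _ => 0) p.2) with hydef
      have hy : Γ.mulVec y = 0 := by
        funext p
        obtain ⟨j, i⟩ := p
        rw [expand j i y]
        simp only [hydef, hΓ1, Sum.elim_inl, Sum.elim_inr, mul_zero,
          Finset.sum_const_zero, add_zero]
        rw [Finset.sum_eq_single j]
        · simp only [hΓ2, hΓ3, if_pos rfl, if_true, Pi.zero_apply, mul_zero, Finset.sum_const_zero, add_zero,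
            neg_mul_neg]
          rw [add_comm]
          exact hz' i
        · intro j' _ hj'
          simp [hΓ2, hΓ3, hj']
        · intro h
          exact absurd (Finset.mem_univ j) h
      have hy0 := key y hy
      funext c
      rcases c with r | l
      · have := congrFun hy0 (Sum.inr ⟨⟨0, hN⟩, Sum.inl r⟩)
        simp only [hydef, Sum.elim_inr, Sum.elim_inl, Pi.zero_apply, neg_eq_zero] at this
        exact this
      · have := congrFun hy0 (Sum.inl l)
        simpa [hydef] using this
    | succ j =>
      intro z hz
      have hz' := hz'gen z hz
      set g : (j' : Fin N) → (Fin R ⊕ Fin (L j'.succ)) → 𝔽 :=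
        Pi.single j (Sum.elim (fun r => z (Sum.inl r)) (fun l => z (Sum.inr l))) with hgdef
      set y : Fin (L 0) ⊕ ((j : Fin N) × (Fin R ⊕ Fin (L j.succ))) → 𝔽 :=
        Sum.elim 0 (fun p => g p.1 p.2) with hydef
      have hy : Γ.mulVec y = 0 := by
        funext p
        obtain ⟨jr, i⟩ := p
        rw [expand jr i y]
        simp only [hydef, Sum.elim_inl, Sum.elim_inr, Pi.zero_apply, mul_zero,
          Finset.sum_const_zero, zero_add]
        rw [Finset.sum_eq_single j]
        · simp only [hgdef, Pi.single_eq_same, Sum.elim_inl, Sum.elim_inr]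
          by_cases h : j = jr
          · subst h
            simp only [hΓ2, hΓ3, if_pos rfl, if_true, Pi.zero_apply, neg_mul, Finset.sum_neg_distrib,
              ← neg_add, neg_eq_zero]
            exact hz' i
          · simp [hΓ2, hΓ3, h]
        · intro j' _ hj'
          simp [hgdef, Pi.single_eq_of_ne hj']
        · intro h
          exact absurd (Finset.mem_univ j) h
      have hy0 := key y hy
      funext c
      rcases c with r | l
      · have := congrFun hy0 (Sum.inr ⟨j, Sum.inl r⟩)
        simpa [hydef, hgdef, Pi.single_eq_same] using this
      · have := congrFun hy0 (Sum.inr ⟨j, Sum.inr l⟩)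
        simpa [hydef, hgdef, Pi.single_eq_same] using this
  intro x x' hxx'
  have h0 : (Matrix.fromCols M (C n)).mulVec (x - x') = 0 := by
    have : (Matrix.fromCols M (C n)).mulVecLin (x - x') = 0 := by
      rw [map_sub, hxx', sub_self]
    simpa [Matrix.mulVecLin_apply] using this
  have := main (x - x') h0
  exact sub_eq_zero.mp this
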